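/- Under the same assumptions (β ≥ 0, {a_k} strongly increasing, {d_{k,i}} a regular kernel, {b_k} positive), Σ_{k=N}^{M} a_k (Σ_{i=k}^{M} d_{k,i+1} b_i)^β ≈ Σ_{k=N}^{M} a_k d_{k,k+1}^β (Σ_{i=k}^{M} b_i)^β. -/

import Mathlib

open ENNReal MeasureTheory


lemma frink_chain (D : ℤ → ℤ → ℝ) (hD0 : ∀ k i, 0 ≤ D k i)
    (hq : ∀ k j i : ℤ, k ≤ j → j ≤ i → D k i ≤ Real.sqrt 2 * max (D k j) (D j i)) :
    ∀ (n : ℕ) (u v : ℤ), u < v → (v - u).toNat ≤ n →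
      D u v ≤ 2 * ∑ j ∈ Finset.Ico u v, D j (j + 1) := by
  have hs20 : (0:ℝ) ≤ Real.sqrt 2 := Real.sqrt_nonneg _
  have hs2 : (1:ℝ) ≤ Real.sqrt 2 := by
    rw [show (1:ℝ) = Real.sqrt 1 by simp]
    exact Real.sqrt_le_sqrt (by norm_num)
  have hs2sq : Real.sqrt 2 * Real.sqrt 2 = 2 := Real.mul_self_sqrt (by norm_num)
  intro n
  induction n with
  | zero => intro u v huv hle; omega
  | succ n IH =>
    intro u v huv hle
    set T := ∑ j ∈ Finset.Ico u v, D j (j + 1) with hT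
    have hT0 : 0 ≤ T := Finset.sum_nonneg fun j _ => hD0 _ _
    have hsingle : ∀ j : ℤ, u ≤ j → j < v → D j (j+1) ≤ T := by
      intro j h1 h2
      exact Finset.single_le_sum (f := fun j => D j (j+1))
        (fun i _ => hD0 _ _) (Finset.mem_Ico.2 ⟨h1, h2⟩)
    by_cases hv1 : v = u + 1
    · have hTe : T = D u (u+1) := by
        have he : Finset.Ico u (u+1) = {u} := by
          ext x; simp only [Finset.mem_Ico, Finset.mem_singleton]; omega
        rw [hT, hv1, he, Finset.sum_singleton]
      rw [hv1, hTe]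
      have := hD0 u (u+1); linarith
    · have hv2 : u + 2 ≤ v := by omega
      classical
      set P : ℕ → Prop := fun s => ∑ j ∈ Finset.Ico u (u + (s:ℤ)), D j (j + 1) ≤ T / 2
        with hPdef
      have hP0 : P 0 := by
        show ∑ j ∈ Finset.Ico u (u + ((0:ℕ):ℤ)), D j (j + 1) ≤ T / 2
        rw [show u + ((0:ℕ):ℤ) = u by simp, Finset.Ico_self, Finset.sum_empty]
        linarith
      set Nn : ℕ := (v - u).toNat with hNn
      have hNn2 : 2 ≤ Nn := by omega
      set m : ℕ := Nat.findGreatest P (Nn - 1) with hm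
      have hPm : P m := Nat.findGreatest_spec (Nat.zero_le _) hP0
      have hmle : m ≤ Nn - 1 := Nat.findGreatest_le _
      set w : ℤ := u + (m:ℤ) with hw
      have hwu : u ≤ w := by omega
      have hwv : w ≤ v - 1 := by omega
      have hL : ∑ j ∈ Finset.Ico u w, D j (j+1) ≤ T / 2 := hPm
      have hR : ∑ j ∈ Finset.Ico (w+1) v, D j (j+1) ≤ T / 2 := by
        by_cases hwv1 : w = v - 1
        · rw [hwv1]
          simp only [sub_add_cancel, Finset.Ico_self, Finset.sum_empty]
          linarith
        · have hmlt : m + 1 ≤ Nn - 1 := by omega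
          have hnP : ¬ P (m+1) := Nat.findGreatest_is_greatest (by omega) hmlt
          have hsplit : ∑ j ∈ Finset.Ico u (w+1), D j (j+1)
              + ∑ j ∈ Finset.Ico (w+1) v, D j (j+1) = T :=
            by
              rw [hT, ← Finset.Ico_union_Ico_eq_Ico (show u ≤ w+1 by omega)
                (show w+1 ≤ v by omega),
                Finset.sum_union (Finset.Ico_disjoint_Ico_consecutive u (w+1) v)]
          have hcast : u + ((m+1:ℕ):ℤ) = w + 1 := by push_cast [hw]; ring
          have h2 : ¬ (∑ j ∈ Finset.Ico u (w+1), D j (j+1) ≤ T/2) := by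
            rw [← hcast]; exact hnP
          push_neg at h2
          linarith
      -- bound on D w v
      have hDwv : w < v → D w v ≤ Real.sqrt 2 * T := by
        intro hlt
        by_cases hwv1 : w = v - 1
        · have h1 : D w v ≤ T := by
            have := hsingle w hwu (by omega)
            rw [hwv1] at this ⊢
            simpa [sub_add_cancel] using this
          nlinarith
        · have h1 : D (w+1) v ≤ 2 * (T/2) := by
            refine le_trans (IH (w+1) v (by omega) ?_) (by linarith)
            omega
          have h2 : D w (w+1) ≤ T := hsingle w hwu (by omega)
          have h3 := hq w (w+1) v (by omega) (by omega)
          have h4 : max (D w (w+1)) (D (w+1) v) ≤ T := max_le h2 (by linarith)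
          calc D w v ≤ Real.sqrt 2 * max (D w (w+1)) (D (w+1) v) := h3
            _ ≤ Real.sqrt 2 * T := by nlinarith
      by_cases hwu1 : w = u
      · have := hDwv (by omega)
        rw [hwu1] at this
        nlinarith
      · have h1 : D u w ≤ 2 * (T/2) := by
          refine le_trans (IH u w (by omega) ?_) (by linarith)
          omega
        have h2 := hDwv (by omega)
        have h3 := hq u w v (by omega) (by omega)
        have h4 : max (D u w) (D w v) ≤ Real.sqrt 2 * T :=
          max_le (by nlinarith) h2
        calc D u v ≤ Real.sqrt 2 * max (D u w) (D w v) := h3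
          _ ≤ Real.sqrt 2 * (Real.sqrt 2 * T) := by nlinarith
          _ = 2 * T := by rw [← mul_assoc, hs2sq]


lemma rpow_iSup_comm {ι : Sort*} (f : ι → ℝ≥0∞) {γ : ℝ} (hγ : 0 < γ) :
    (⨆ i, f i) ^ γ = ⨆ i, (f i) ^ γ := by
  have hid : ∀ x : ℝ≥0∞, (x ^ (1/γ)) ^ γ = x := by
    intro x
    rw [← ENNReal.rpow_mul, one_div, inv_mul_cancel₀ (ne_of_gt hγ), ENNReal.rpow_one]
  have hid2 : ∀ x : ℝ≥0∞, (x ^ γ) ^ (1/γ) = x := by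
    intro x
    rw [← ENNReal.rpow_mul, one_div, mul_inv_cancel₀ (ne_of_gt hγ), ENNReal.rpow_one]
  apply le_antisymm
  · have h1 : (⨆ i, f i) ≤ (⨆ i, (f i) ^ γ) ^ (1/γ) := by
      apply iSup_le
      intro i
      rw [← hid2 (f i)]
      exact ENNReal.rpow_le_rpow (le_iSup (fun i => (f i)^γ) i) (by positivity)
    calc (⨆ i, f i) ^ γ ≤ (((⨆ i, (f i) ^ γ) ^ (1/γ))) ^ γ :=
          ENNReal.rpow_le_rpow h1 (le_of_lt hγ)
      _ = ⨆ i, (f i) ^ γ := hid _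
  · exact iSup_le fun i => ENNReal.rpow_le_rpow (le_iSup f i) (le_of_lt hγ)

lemma tsum_iSup_swap (f : ℕ → ℤ → ℝ≥0∞) (hmono : Monotone f) :
    ∑' i, ⨆ n, f n i = ⨆ n, ∑' i, f n i := by
  have hm : ∀ n, Measurable (f n) := fun n => measurable_from_top
  have := lintegral_iSup (μ := Measure.count) hm hmono
  simpa [MeasureTheory.lintegral_count] using this

lemma mink2 {p : ℝ} (hp : 1 ≤ p) (f g : ℤ → ℝ≥0∞) :
    (∑' i, (f i + g i) ^ p) ^ (1/p) ≤
      (∑' i, (f i) ^ p) ^ (1/p) + (∑' i, (g i) ^ p) ^ (1/p) := by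
  have := ENNReal.lintegral_Lp_add_le (μ := Measure.count (α := ℤ)) (f := f) (g := g)
    (measurable_from_top).aemeasurable (measurable_from_top).aemeasurable hp
  simpa [MeasureTheory.lintegral_count] using this

lemma minkF {p : ℝ} (hp : 1 ≤ p) (s : Finset ℤ) (v : ℤ → ℤ → ℝ≥0∞) :
    (∑' i, (∑ j ∈ s, v j i) ^ p) ^ (1/p) ≤ ∑ j ∈ s, (∑' i, (v j i) ^ p) ^ (1/p) := by
  have hp0 : (0:ℝ) < p := lt_of_lt_of_le one_pos hp
  classical
  induction s using Finset.induction with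
  | empty =>
      simp [ENNReal.zero_rpow_of_pos hp0, ENNReal.zero_rpow_of_pos (by positivity : (0:ℝ) < 1/p),
        hp0]
  | @insert a s hj IH =>
      simp only [Finset.sum_insert hj]
      calc (∑' i, (v a i + ∑ j ∈ s, v j i) ^ p) ^ (1/p)
          ≤ (∑' i, (v a i) ^ p) ^ (1/p) + (∑' i, (∑ j ∈ s, v j i) ^ p) ^ (1/p) :=
            mink2 hp _ _
        _ ≤ _ := add_le_add (le_refl _) IH

lemma minkT {p : ℝ} (hp : 1 ≤ p) (v : ℤ → ℤ → ℝ≥0∞) :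
    (∑' i, (∑' j, v j i) ^ p) ^ (1/p) ≤ ∑' j, (∑' i, (v j i) ^ p) ^ (1/p) := by
  have hp0 : (0:ℝ) < p := lt_of_lt_of_le one_pos hp
  have hp0' : (0:ℝ) < 1/p := by positivity
  set F : ℕ → Finset ℤ := fun n => Finset.Icc (-(n:ℤ)) (n:ℤ) with hF
  have hFex : ∀ t : Finset ℤ, ∃ n, t ⊆ F n := by
    intro t
    refine ⟨t.sup Int.natAbs, fun x hx => ?_⟩
    have := Finset.le_sup (f := Int.natAbs) hx
    simp only [hF, Finset.mem_Icc]
    omega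
  have hFmono : ∀ i, Monotone fun n => (∑ j ∈ F n, v j i) ^ p := by
    intro i n m hnm
    apply ENNReal.rpow_le_rpow _ (le_of_lt hp0)
    apply Finset.sum_le_sum_of_subset
    intro x hx
    simp only [hF, Finset.mem_Icc] at hx ⊢
    omega
  calc (∑' i, (∑' j, v j i) ^ p) ^ (1/p)
      = (∑' i, ⨆ n, (∑ j ∈ F n, v j i) ^ p) ^ (1/p) := by
        congr 1
        refine tsum_congr fun i => ?_
        rw [ENNReal.tsum_eq_iSup_sum' F hFex, rpow_iSup_comm _ hp0]
    _ = (⨆ n, ∑' i, (∑ j ∈ F n, v j i) ^ p) ^ (1/p) := by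
        rw [tsum_iSup_swap]
        intro n m hnm i
        exact hFmono i hnm
    _ = ⨆ n, (∑' i, (∑ j ∈ F n, v j i) ^ p) ^ (1/p) := rpow_iSup_comm _ hp0'
    _ ≤ ⨆ n, ∑ j ∈ F n, (∑' i, (v j i) ^ p) ^ (1/p) := iSup_mono fun n => minkF hp _ _
    _ ≤ ∑' j, (∑' i, (v j i) ^ p) ^ (1/p) := by
        apply iSup_le
        intro n
        exact ENNReal.sum_le_tsum _


lemma tsum_of_support_le (f : ℤ → ℝ≥0∞) (j : ℤ) (h : ∀ k, j < k → f k = 0) :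
    ∑' k, f k = ∑' m : ℕ, f (j - m) := by
  symm
  apply Function.Injective.tsum_eq (g := fun m : ℕ => j - (m:ℤ))
  · intro m m' hmm
    simp only at hmm
    omega
  · intro x hx
    rcases Function.mem_support.1 hx with hfx
    have hxj : x ≤ j := by
      by_contra hc
      exact hfx (h x (by omega))
    exact ⟨(j - x).toNat, by simp only; omega⟩

lemma tsum_of_support_ge (f : ℤ → ℝ≥0∞) (j : ℤ) (h : ∀ k, k < j → f k = 0) :
    ∑' k, f k = ∑' m : ℕ, f (j + m) := by
  symm
  apply Function.Injective.tsum_eq (g := fun m : ℕ => j + (m:ℤ))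
  · intro m m' hmm
    simp only at hmm
    omega
  · intro x hx
    rcases Function.mem_support.1 hx with hfx
    have hxj : j ≤ x := by
      by_contra hc
      exact hfx (h x (by omega))
    exact ⟨(x - j).toNat, by simp only; omega⟩


/-- The set of integers `k` with `N ≤ k ≤ M`, where `N, M` are extended reals
(so that `N = -∞` or `M = +∞` are allowed). -/
def zset (N M : EReal) : Set ℤ := {k : ℤ | N ≤ ((k : ℝ) : EReal) ∧ ((k : ℝ) : EReal) ≤ M}

theorem sum_kernel_sum_of_strongly_increasing (β ρ cd : ℝ)
    (hβ : 0 ≤ β) (hρ : 1 < ρ) (hcd : 0 < cd) :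
    ∃ c C : ℝ, 0 < c ∧ 0 < C ∧
      ∀ (N M : EReal), N < M → ∀ (a b : ℤ → ℝ) (d : ℤ → ℤ → ℝ),
        (∀ k, 0 < a k) → (∀ k, 0 < b k) →
        (∀ k : ℤ, k ∈ zset N M → (k + 1) ∈ zset N M → ρ * a k ≤ a (k + 1)) →
        (∀ k i, 0 ≤ d k i) →
        (∀ k j i : ℤ, k ≤ j → d j i ≤ d k i) →
        (∀ k j i : ℤ, j ≤ i → d k j ≤ d k i) →
        (∀ k j i : ℤ, k ≤ j → j ≤ i → d k i ≤ cd * (d k j + d j i)) →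
        ENNReal.ofReal c *
            (∑' k : zset N M, ENNReal.ofReal (a (k : ℤ)) *
                ENNReal.ofReal (d (k : ℤ) ((k : ℤ) + 1)) ^ β *
                (∑' i : zset (((k : ℤ) : ℝ) : EReal) M, ENNReal.ofReal (b (i : ℤ))) ^ β) ≤
          (∑' k : zset N M, ENNReal.ofReal (a (k : ℤ)) *
              (∑' i : zset (((k : ℤ) : ℝ) : EReal) M,
                ENNReal.ofReal (d (k : ℤ) ((i : ℤ) + 1)) * ENNReal.ofReal (b (i : ℤ))) ^ β) ∧
        (∑' k : zset N M, ENNReal.ofReal (a (k : ℤ)) *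
            (∑' i : zset (((k : ℤ) : ℝ) : EReal) M,
              ENNReal.ofReal (d (k : ℤ) ((i : ℤ) + 1)) * ENNReal.ofReal (b (i : ℤ))) ^ β) ≤
          ENNReal.ofReal C *
            (∑' k : zset N M, ENNReal.ofReal (a (k : ℤ)) *
                ENNReal.ofReal (d (k : ℤ) ((k : ℤ) + 1)) ^ β *
                (∑' i : zset (((k : ℤ) : ℝ) : EReal) M, ENNReal.ofReal (b (i : ℤ))) ^ β) := by
  classical
  have hcoe : ∀ k i : ℤ, (((k:ℝ):EReal) ≤ ((i:ℝ):EReal)) ↔ k ≤ i := by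
    intro k i
    rw [EReal.coe_le_coe_iff, Int.cast_le]
  rcases eq_or_lt_of_le hβ with hβ0 | hβpos
  · -- β = 0 : trivial
    refine ⟨1, 1, one_pos, one_pos, ?_⟩
    intro N M hNM a b d ha hb hstep hd0 hd1 hd2 hd3
    simp only [← hβ0, ENNReal.rpow_zero, mul_one, ENNReal.ofReal_one, one_mul]
    exact ⟨le_refl _, le_refl _⟩
  -- setup of constants
  set cd' : ℝ := max cd 1 with hcd'
  have hcd1 : (1:ℝ) ≤ cd' := le_max_right _ _
  have h2cd : (1:ℝ) < 2 * cd' := by nlinarith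
  have hlog : 0 < Real.log (2 * cd') := Real.log_pos h2cd
  set α : ℝ := Real.log 2 / (2 * Real.log (2 * cd')) with hα
  have hαpos : 0 < α := by
    apply div_pos (Real.log_pos (by norm_num)) (by linarith)
  have hαhalf : α ≤ 1/2 := by
    rw [hα, div_le_div_iff₀ (by linarith) (by norm_num)]
    have h22 : Real.log 2 ≤ Real.log (2 * cd') :=
      Real.log_le_log (by norm_num) (by nlinarith)
    nlinarith [Real.log_pos (show (1:ℝ) < 2 by norm_num)]
  set p : ℝ := 1/α with hp
  have hppos : 0 < p := by positivity
  have hp1 : 1 ≤ p := by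
    rw [hp, le_div_iff₀ hαpos, one_mul]; linarith
  have hαp : α * p = 1 := by
    rw [hp]; field_simp
  set γ : ℝ := p * β with hγdef
  have hγpos : 0 < γ := by positivity
  have hαγ : α * γ = β := by
    rw [hγdef, ← mul_assoc, hαp, one_mul]
  set δ : ℝ := (2*γ)⁻¹ with hδ
  have hδpos : 0 < δ := by positivity
  have hδγ : δ * γ = 2⁻¹ := by
    rw [hδ]; field_simp
  set r : ℝ≥0∞ := ENNReal.ofReal (ρ ^ (-δ)) with hr
  set ow : ℝ≥0∞ := ENNReal.ofReal (ρ ^ δ) with how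
  set w2 : ℝ≥0∞ := ENNReal.ofReal (ρ ^ ((2:ℝ)⁻¹)) with hw2
  set q0 : ℝ≥0∞ := ENNReal.ofReal (ρ ^ (-(2:ℝ)⁻¹)) with hq0
  have hρ0 : (0:ℝ) < ρ := by linarith
  have hrlt : r < 1 := by
    rw [hr]
    apply ENNReal.ofReal_lt_one.2
    exact Real.rpow_lt_one_of_one_lt_of_neg hρ (by linarith)
  have hq0lt : q0 < 1 := by
    rw [hq0]
    apply ENNReal.ofReal_lt_one.2
    exact Real.rpow_lt_one_of_one_lt_of_neg hρ (by norm_num)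
  set K1 : ℝ≥0∞ := (1 - r)⁻¹ with hK1
  set K2 : ℝ≥0∞ := (1 - q0)⁻¹ with hK2
  have hK1top : K1 ≠ ∞ := by
    rw [hK1, Ne, ENNReal.inv_eq_top]
    exact (tsub_pos_of_lt hrlt).ne'
  have hK2top : K2 ≠ ∞ := by
    rw [hK2, Ne, ENNReal.inv_eq_top]
    exact (tsub_pos_of_lt hq0lt).ne'
  set K : ℝ≥0∞ := (ENNReal.ofReal 2) ^ (p*β) * K1 ^ γ * K2 with hK
  have hKtop : K ≠ ∞ := by
    rw [hK]
    apply ENNReal.mul_ne_top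
    apply ENNReal.mul_ne_top
    · exact ENNReal.rpow_ne_top_of_nonneg (by positivity) ENNReal.ofReal_ne_top
    · exact ENNReal.rpow_ne_top_of_nonneg (le_of_lt hγpos) hK1top
    · exact hK2top
  refine ⟨1, K.toReal + 1, one_pos, by positivity, ?_⟩
  have hKle : K ≤ ENNReal.ofReal (K.toReal + 1) := by
    conv_lhs => rw [← ENNReal.ofReal_toReal hKtop]
    exact ENNReal.ofReal_le_ofReal (by linarith)
  intro N M hNM a b d ha hb hstep hd0 hd1 hd2 hd3
  set S : Set ℤ := zset N M with hS
  have hzk : ∀ k i : ℤ, k ∈ S → (i ∈ zset ((k:ℝ):EReal) M ↔ (k ≤ i ∧ i ∈ S)) := by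
    intro k i hk
    constructor
    · rintro ⟨h1, h2⟩
      have hki : k ≤ i := (hcoe k i).1 h1
      exact ⟨hki, le_trans hk.1 h1, h2⟩
    · rintro ⟨h1, h2⟩
      exact ⟨(hcoe k i).2 h1, h2.2⟩
  have hint : ∀ k j i : ℤ, k ∈ S → i ∈ S → k ≤ j → j ≤ i → j ∈ S := by
    intro k j i hk hi h1 h2
    exact ⟨le_trans hk.1 ((hcoe k j).2 h1), le_trans ((hcoe j i).2 h2) hi.2⟩
  -- ENNReal abbreviations
  set A : ℤ → ℝ≥0∞ := fun k => ENNReal.ofReal (a k) with hA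
  set B : ℤ → ℝ≥0∞ := fun i => ENNReal.ofReal (b i) with hB
  set Dd : ℤ → ℤ → ℝ≥0∞ := fun k i => ENNReal.ofReal (d k i) with hDd
  constructor
  · -- lower bound
    rw [ENNReal.ofReal_one, one_mul]
    apply ENNReal.tsum_le_tsum
    intro k
    rw [mul_assoc, ← ENNReal.mul_rpow_of_nonneg _ _ hβ]
    apply mul_le_mul_right
    apply ENNReal.rpow_le_rpow _ hβ
    rw [← ENNReal.tsum_mul_left]
    apply ENNReal.tsum_le_tsum
    intro i
    apply mul_le_mul_left
    apply ENNReal.ofReal_le_ofReal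
    apply hd2
    have hki : (k:ℤ) ≤ (i:ℤ) := (hcoe _ _).1 i.2.1
    omega
  · -- UPPER BOUND
    have hd3' : ∀ k j i : ℤ, k ≤ j → j ≤ i → d k i ≤ (2*cd') * max (d k j) (d j i) := by
      intro k j i h1 h2
      have h3 := hd3 k j i h1 h2
      have h4 : d k j + d j i ≤ 2 * max (d k j) (d j i) := by
        rcases le_total (d k j) (d j i) with h | h
        · rw [max_eq_right h]; linarith
        · rw [max_eq_left h]; linarith
      have h5 : 0 ≤ d k j + d j i := add_nonneg (hd0 _ _) (hd0 _ _)
      have h6 : cd * (d k j + d j i) ≤ cd' * (d k j + d j i) :=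
        mul_le_mul_of_nonneg_right (le_max_left _ _) h5
      have h7 : cd' * (d k j + d j i) ≤ cd' * (2 * max (d k j) (d j i)) :=
        mul_le_mul_of_nonneg_left h4 (by linarith)
      calc d k i ≤ cd * (d k j + d j i) := h3
        _ ≤ cd' * (2 * max (d k j) (d j i)) := le_trans h6 h7
        _ = (2*cd') * max (d k j) (d j i) := by ring
    have hkey : (2*cd') ^ α = Real.sqrt 2 := by
      rw [Real.rpow_def_of_pos (by linarith)]
      have h1 : Real.log (2*cd') * α = Real.log 2 / 2 := by
        rw [hα]; field_simp
      rw [h1, Real.sqrt_eq_rpow, Real.rpow_def_of_pos (by norm_num)]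
      ring_nf
    have hqc : ∀ k j i : ℤ, k ≤ j → j ≤ i →
        (d k i)^α ≤ Real.sqrt 2 * max ((d k j)^α) ((d j i)^α) := by
      intro k j i h1 h2
      have hmax0 : 0 ≤ max (d k j) (d j i) := le_trans (hd0 k j) (le_max_left _ _)
      calc (d k i)^α ≤ ((2*cd') * max (d k j) (d j i))^α :=
            Real.rpow_le_rpow (hd0 _ _) (hd3' k j i h1 h2) (le_of_lt hαpos)
        _ = (2*cd')^α * (max (d k j) (d j i))^α := Real.mul_rpow (by linarith) hmax0
        _ = Real.sqrt 2 * max ((d k j)^α) ((d j i)^α) := by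
            rw [hkey]
            congr 1
            rcases le_total (d k j) (d j i) with h | h
            · rw [max_eq_right h,
                max_eq_right (Real.rpow_le_rpow (hd0 _ _) h (le_of_lt hαpos))]
            · rw [max_eq_left h,
                max_eq_left (Real.rpow_le_rpow (hd0 _ _) h (le_of_lt hαpos))]
    have hfrinkR : ∀ k i : ℤ, k ≤ i →
        d k (i+1) ≤ (2 * ∑ j ∈ Finset.Icc k i, (d j (j+1))^α) ^ p := by
      intro k i hki
      have hico : Finset.Ico k (i+1) = Finset.Icc k i := by
        ext x; simp only [Finset.mem_Ico, Finset.mem_Icc]; omega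
      have h1 := frink_chain (fun u v => (d u v)^α)
        (fun u v => Real.rpow_nonneg (hd0 u v) α) hqc ((i+1-k).toNat) k (i+1)
        (by omega) (le_refl _)
      rw [hico] at h1
      have h2 : d k (i+1) = ((d k (i+1))^α)^p := by
        rw [← Real.rpow_mul (hd0 _ _), hαp, Real.rpow_one]
      rw [h2]
      exact Real.rpow_le_rpow (Real.rpow_nonneg (hd0 _ _) _) h1 (le_of_lt hppos)
    have hgeoR : ∀ (m:ℕ) (k:ℤ), k ∈ S → (k + (m:ℤ)) ∈ S → a k * ρ^m ≤ a (k + (m:ℤ)) := by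
      intro m
      induction m with
      | zero => intro k h1 h2; simp
      | succ n IH =>
        intro k h1 h2
        have hc1 : k + ((n+1:ℕ):ℤ) = k + (n:ℤ) + 1 := by push_cast; ring
        rw [hc1] at h2
        have hmem : (k + (n:ℤ)) ∈ S := hint k (k + (n:ℤ)) (k + (n:ℤ) + 1) h1 h2
          (by omega) (by omega)
        have h3 := hstep (k + (n:ℤ)) hmem h2
        have h4 := IH k h1 hmem
        have h5 : a k * ρ^(n+1) ≤ a (k + (n:ℤ) + 1) := by
          calc a k * ρ^(n+1) = (a k * ρ^n) * ρ := by ring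
            _ ≤ a (k + (n:ℤ)) * ρ := mul_le_mul_of_nonneg_right h4 (le_of_lt hρ0)
            _ = ρ * a (k + (n:ℤ)) := mul_comm _ _
            _ ≤ a (k + (n:ℤ) + 1) := h3
        rw [hc1]
        exact h5
    have hgeoE : ∀ k j : ℤ, k ∈ S → j ∈ S → k ≤ j →
        A k ≤ (ENNReal.ofReal ρ⁻¹)^((j-k).toNat) * A j := by
      intro k j hk hj hkj
      have hjm : j = k + (((j-k).toNat : ℕ):ℤ) := by omega
      have h1 : a k * ρ^((j-k).toNat) ≤ a j := by
        nth_rewrite 2 [hjm]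
        rw [hjm] at hj
        exact hgeoR (j-k).toNat k hk hj
      have hρm : (0:ℝ) < ρ^((j-k).toNat) := by positivity
      have h2 : a k ≤ (ρ⁻¹)^((j-k).toNat) * a j := by
        rw [inv_pow, inv_mul_eq_div, le_div_iff₀ hρm]
        linarith
      calc A k ≤ ENNReal.ofReal ((ρ⁻¹)^((j-k).toNat) * a j) := ENNReal.ofReal_le_ofReal h2
        _ = (ENNReal.ofReal ρ⁻¹)^((j-k).toNat) * A j := by
            rw [ENNReal.ofReal_mul (by positivity), ENNReal.ofReal_pow (by positivity)]
    -- ENNReal-level objects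
    set E : ℤ → ℝ≥0∞ := fun j => ENNReal.ofReal ((d j (j+1))^α) with hE
    set Bt : ℤ → ℝ≥0∞ := fun j => ∑' i : ℤ, (if (j ≤ i ∧ i ∈ S) then B i else 0) with hBt
    set cc : ℤ → ℝ≥0∞ := fun j => E j * (Bt j)^α with hcc
    set T1 : ℤ → ℝ≥0∞ := fun k =>
      ∑' i : ℤ, (if (k ≤ i ∧ i ∈ S) then Dd k (i+1) * B i else 0) with hT1
    set X : ℤ → ℝ≥0∞ := fun k => ∑' j : ℤ, (if (j ∈ S ∧ k ≤ j) then cc j else 0) with hX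
    have hED : ∀ j : ℤ, E j = (Dd j (j+1))^α := by
      intro j
      rw [hE, hDd]
      exact (ENNReal.ofReal_rpow_of_nonneg (hd0 _ _) (le_of_lt hαpos)).symm
    have hchainE : ∀ k i : ℤ, k ≤ i →
        Dd k (i+1) ≤ (ENNReal.ofReal 2 * ∑ j ∈ Finset.Icc k i, E j) ^ p := by
      intro k i hki
      have hsum0 : (0:ℝ) ≤ ∑ j ∈ Finset.Icc k i, (d j (j+1))^α :=
        Finset.sum_nonneg fun j _ => Real.rpow_nonneg (hd0 _ _) _
      calc Dd k (i+1)
          ≤ ENNReal.ofReal ((2 * ∑ j ∈ Finset.Icc k i, (d j (j+1))^α)^p) :=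
            ENNReal.ofReal_le_ofReal (hfrinkR k i hki)
        _ = (ENNReal.ofReal (2 * ∑ j ∈ Finset.Icc k i, (d j (j+1))^α))^p := by
            rw [ENNReal.ofReal_rpow_of_nonneg (by linarith) (le_of_lt hppos)]
        _ = (ENNReal.ofReal 2 * ∑ j ∈ Finset.Icc k i, E j)^p := by
            congr 1
            rw [ENNReal.ofReal_mul (by norm_num),
              ENNReal.ofReal_sum_of_nonneg (fun j _ => Real.rpow_nonneg (hd0 _ _) _)]
    -- Minkowski step
    have hGX : ∀ k : ℤ, k ∈ S →
        (∑' i : ℤ, (if (k ≤ i ∧ i ∈ S) then (∑ j ∈ Finset.Icc k i, E j)^p * B i else 0))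
          ≤ (X k)^p := by
      intro k hk
      set v : ℤ → ℤ → ℝ≥0∞ := fun j i =>
        if (i ∈ S ∧ k ≤ i ∧ j ∈ S ∧ k ≤ j ∧ j ≤ i) then E j * (B i)^α else 0 with hv
      have h1p : (1:ℝ)/p = α := by
        rw [hp, one_div_one_div]
      have hvsum : ∀ i : ℤ,
          (if (k ≤ i ∧ i ∈ S) then (∑ j ∈ Finset.Icc k i, E j)^p * B i else 0)
            = (∑' j : ℤ, v j i)^p := by
        intro i
        by_cases hi : k ≤ i ∧ i ∈ S
        · rw [if_pos hi]
          have h1 : ∀ j : ℤ, v j i = (if (k ≤ j ∧ j ≤ i) then E j else 0) * (B i)^α := by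
            intro j
            by_cases hj : k ≤ j ∧ j ≤ i
            · rw [hv]
              simp only
              rw [if_pos ⟨hi.2, hi.1, hint k j i hk hi.2 hj.1 hj.2, hj.1, hj.2⟩, if_pos hj]
            · rw [hv]
              simp only
              rw [if_neg (fun hh => hj ⟨hh.2.2.2.1, hh.2.2.2.2⟩), if_neg hj, zero_mul]
          rw [tsum_congr h1, ENNReal.tsum_mul_right]
          have h2 : (∑' j : ℤ, (if (k ≤ j ∧ j ≤ i) then E j else 0))
              = ∑ j ∈ Finset.Icc k i, E j := by
            rw [tsum_eq_sum (s := Finset.Icc k i)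
              (fun j hj => if_neg (fun hh => hj (Finset.mem_Icc.2 hh)))]
            exact Finset.sum_congr rfl fun j hj => if_pos (Finset.mem_Icc.1 hj)
          rw [h2, ENNReal.mul_rpow_of_nonneg _ _ (le_of_lt hppos),
            ← ENNReal.rpow_mul, hαp, ENNReal.rpow_one]
        · rw [if_neg hi]
          have h1 : ∀ j : ℤ, v j i = 0 := by
            intro j
            rw [hv]
            simp only
            rw [if_neg (fun hh => hi ⟨hh.2.1, hh.1⟩)]
          rw [tsum_congr h1, tsum_zero, ENNReal.zero_rpow_of_pos hppos]
      have hper : ∀ j : ℤ, (∑' i : ℤ, (v j i)^p)^(1/p)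
          ≤ (if (j ∈ S ∧ k ≤ j) then cc j else 0) := by
        intro j
        by_cases hj : j ∈ S ∧ k ≤ j
        · have h1 : ∀ i : ℤ, (v j i)^p
              = (if (j ≤ i ∧ i ∈ S) then (E j)^p * B i else 0) := by
            intro i
            by_cases hi : j ≤ i ∧ i ∈ S
            · rw [hv]
              simp only
              rw [if_pos ⟨hi.2, le_trans hj.2 hi.1, hj.1, hj.2, hi.1⟩, if_pos hi,
                ENNReal.mul_rpow_of_nonneg _ _ (le_of_lt hppos),
                ← ENNReal.rpow_mul, hαp, ENNReal.rpow_one]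
            · rw [hv]
              simp only
              rw [if_neg (fun hh => hi ⟨hh.2.2.2.2, hh.1⟩), if_neg hi,
                ENNReal.zero_rpow_of_pos hppos]
          have h2 : (∑' i : ℤ, (if (j ≤ i ∧ i ∈ S) then (E j)^p * B i else 0))
              = (E j)^p * Bt j := by
            rw [hBt]
            simp only
            rw [← ENNReal.tsum_mul_left]
            apply tsum_congr
            intro i
            by_cases hi : j ≤ i ∧ i ∈ S
            · rw [if_pos hi, if_pos hi]
            · rw [if_neg hi, if_neg hi, mul_zero]
          rw [tsum_congr h1, h2, if_pos hj,
            ENNReal.mul_rpow_of_nonneg _ _ (by positivity),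
            ← ENNReal.rpow_mul, h1p]
          have h3 : p * α = 1 := by rw [mul_comm]; exact hαp
          rw [h3, ENNReal.rpow_one, hcc]
        · have h1 : ∀ i : ℤ, (v j i)^p = 0 := by
            intro i
            rw [hv]
            simp only
            rw [if_neg (fun hh => hj ⟨hh.2.2.1, hh.2.2.2.1⟩),
              ENNReal.zero_rpow_of_pos hppos]
          rw [tsum_congr h1, tsum_zero, ENNReal.zero_rpow_of_pos (by positivity), if_neg hj]
      calc (∑' i : ℤ, (if (k ≤ i ∧ i ∈ S) then (∑ j ∈ Finset.Icc k i, E j)^p * B i else 0))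
          = ∑' i : ℤ, (∑' j : ℤ, v j i)^p := tsum_congr hvsum
        _ = ((∑' i : ℤ, (∑' j : ℤ, v j i)^p)^(1/p))^p := by
            rw [← ENNReal.rpow_mul, one_div, inv_mul_cancel₀ (ne_of_gt hppos),
              ENNReal.rpow_one]
        _ ≤ (∑' j : ℤ, (∑' i : ℤ, (v j i)^p)^(1/p))^p :=
            ENNReal.rpow_le_rpow (minkT hp1 v) (le_of_lt hppos)
        _ ≤ (X k)^p := by
            apply ENNReal.rpow_le_rpow _ (le_of_lt hppos)
            rw [hX]
            exact ENNReal.tsum_le_tsum hper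
    have hU1 : ∀ k : ℤ, k ∈ S → T1 k ≤ (ENNReal.ofReal 2)^p * (X k)^p := by
      intro k hk
      calc T1 k
          ≤ ∑' i : ℤ, (if (k ≤ i ∧ i ∈ S)
              then (ENNReal.ofReal 2 * ∑ j ∈ Finset.Icc k i, E j)^p * B i else 0) := by
            rw [hT1]
            apply ENNReal.tsum_le_tsum
            intro i
            by_cases hi : k ≤ i ∧ i ∈ S
            · rw [if_pos hi, if_pos hi]
              exact mul_le_mul_left (hchainE k i hi.1) _
            · rw [if_neg hi, if_neg hi]
        _ = (ENNReal.ofReal 2)^p * ∑' i : ℤ,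
              (if (k ≤ i ∧ i ∈ S) then (∑ j ∈ Finset.Icc k i, E j)^p * B i else 0) := by
            rw [← ENNReal.tsum_mul_left]
            apply tsum_congr
            intro i
            by_cases hi : k ≤ i ∧ i ∈ S
            · rw [if_pos hi, if_pos hi, ENNReal.mul_rpow_of_nonneg _ _ (le_of_lt hppos),
                mul_assoc]
            · rw [if_neg hi, if_neg hi, mul_zero]
        _ ≤ (ENNReal.ofReal 2)^p * (X k)^p := mul_le_mul_right (hGX k hk) _
    -- geometric absorption
    have howm : ∀ m : ℕ, (ow^m)^γ = w2^m := by
      intro m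
      rw [how, hw2, ← ENNReal.ofReal_pow (by positivity), ← ENNReal.ofReal_pow (by positivity),
        ENNReal.ofReal_rpow_of_nonneg (by positivity) (le_of_lt hγpos)]
      congr 1
      rw [← Real.rpow_natCast (ρ^δ) m, ← Real.rpow_mul (le_of_lt hρ0),
        ← Real.rpow_natCast (ρ^((2:ℝ)⁻¹)) m, ← Real.rpow_mul (le_of_lt hρ0),
        ← Real.rpow_mul (le_of_lt hρ0)]
      congr 1
      calc δ * (m:ℝ) * γ = (δ*γ) * m := by ring
        _ = 2⁻¹ * m := by rw [hδγ]
    have hU3 : ∀ k : ℤ, k ∈ S → (X k)^γ ≤ K1^γ * ∑' j : ℤ,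
        (if (j ∈ S ∧ k ≤ j) then w2^((j-k).toNat) * (cc j)^γ else 0) := by
      intro k hk
      set x : ℤ → ℝ≥0∞ := fun j => if (j ∈ S ∧ k ≤ j) then r^((j-k).toNat) else 0 with hx
      set y : ℤ → ℝ≥0∞ := fun j =>
        if (j ∈ S ∧ k ≤ j) then ow^((j-k).toNat) * cc j else 0 with hy
      have hrow : r * ow = 1 := by
        rw [hr, how, ← ENNReal.ofReal_mul (by positivity), ← Real.rpow_add hρ0,
          neg_add_cancel, Real.rpow_zero, ENNReal.ofReal_one]
      have hxy : ∀ j, (if (j ∈ S ∧ k ≤ j) then cc j else 0) = x j * y j := by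
        intro j
        by_cases hj : j ∈ S ∧ k ≤ j
        · rw [hx, hy]
          simp only
          rw [if_pos hj, if_pos hj, if_pos hj, ← mul_assoc, ← mul_pow, hrow, one_pow, one_mul]
        · rw [hx, hy]
          simp only
          rw [if_neg hj, if_neg hj, if_neg hj, zero_mul]
      have hXle : X k ≤ (∑' j, x j) * ⨆ j, y j := by
        rw [hX]
        simp only
        rw [tsum_congr hxy, ← ENNReal.tsum_mul_right]
        apply ENNReal.tsum_le_tsum
        intro j
        exact mul_le_mul_right (le_iSup y j) _
      have hxK1 : (∑' j, x j) ≤ K1 := by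
        rw [tsum_of_support_ge x k (fun kk hkk => by
          rw [hx]; simp only; rw [if_neg (fun hh => by omega)])]
        calc (∑' m:ℕ, x (k + (m:ℤ))) ≤ ∑' m:ℕ, r^m := by
              apply ENNReal.tsum_le_tsum
              intro m
              rw [hx]
              simp only
              by_cases h : (k + (m:ℤ)) ∈ S ∧ k ≤ k + (m:ℤ)
              · rw [if_pos h, show ((k + (m:ℤ)) - k).toNat = m by omega]
              · rw [if_neg h]; exact zero_le
          _ = K1 := by rw [ENNReal.tsum_geometric, hK1]
      calc (X k)^γ ≤ ((∑' j, x j) * ⨆ j, y j)^γ :=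
            ENNReal.rpow_le_rpow hXle (le_of_lt hγpos)
        _ = (∑' j, x j)^γ * (⨆ j, y j)^γ := ENNReal.mul_rpow_of_nonneg _ _ (le_of_lt hγpos)
        _ ≤ K1^γ * (⨆ j, (y j)^γ) := by
            rw [← rpow_iSup_comm y hγpos]
            exact mul_le_mul_left (ENNReal.rpow_le_rpow hxK1 (le_of_lt hγpos)) _
        _ ≤ K1^γ * ∑' j, (y j)^γ :=
            mul_le_mul_right (iSup_le fun j => ENNReal.le_tsum j) _
        _ = K1^γ * ∑' j : ℤ,
              (if (j ∈ S ∧ k ≤ j) then w2^((j-k).toNat) * (cc j)^γ else 0) := by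
            congr 1
            apply tsum_congr
            intro j
            rw [hy]
            simp only
            by_cases hj : j ∈ S ∧ k ≤ j
            · rw [if_pos hj, if_pos hj, ENNReal.mul_rpow_of_nonneg _ _ (le_of_lt hγpos),
                howm]
            · rw [if_neg hj, if_neg hj, ENNReal.zero_rpow_of_pos hγpos]
    have hq0m : ENNReal.ofReal ρ⁻¹ * w2 = q0 := by
      rw [hw2, hq0, ← ENNReal.ofReal_mul (by positivity)]
      congr 1
      rw [← Real.rpow_neg_one ρ, ← Real.rpow_add hρ0]
      norm_num
    have hU4 : ∀ j : ℤ, (∑' k : ℤ, (if (k ∈ S ∧ j ∈ S ∧ k ≤ j)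
          then A k * (w2^((j-k).toNat) * (cc j)^γ) else 0))
        ≤ K2 * (if j ∈ S then A j * (cc j)^γ else 0) := by
      intro j
      have hptwise : ∀ k : ℤ, (if (k ∈ S ∧ j ∈ S ∧ k ≤ j)
            then A k * (w2^((j-k).toNat) * (cc j)^γ) else 0)
          ≤ (if (k ∈ S ∧ j ∈ S ∧ k ≤ j) then q0^((j-k).toNat) else 0)
            * (if j ∈ S then A j * (cc j)^γ else 0) := by
        intro k
        by_cases hkj : k ∈ S ∧ j ∈ S ∧ k ≤ j
        · rw [if_pos hkj, if_pos hkj, if_pos hkj.2.1]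
          calc A k * (w2^((j-k).toNat) * (cc j)^γ)
              ≤ ((ENNReal.ofReal ρ⁻¹)^((j-k).toNat) * A j)
                  * (w2^((j-k).toNat) * (cc j)^γ) :=
                mul_le_mul_left (hgeoE k j hkj.1 hkj.2.1 hkj.2.2) _
            _ = ((ENNReal.ofReal ρ⁻¹)^((j-k).toNat) * w2^((j-k).toNat))
                  * (A j * (cc j)^γ) := by ring
            _ = q0^((j-k).toNat) * (A j * (cc j)^γ) := by
                rw [← mul_pow, hq0m]
        · rw [if_neg hkj, if_neg hkj, zero_mul]
      calc (∑' k : ℤ, (if (k ∈ S ∧ j ∈ S ∧ k ≤ j)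
              then A k * (w2^((j-k).toNat) * (cc j)^γ) else 0))
          ≤ ∑' k : ℤ, (if (k ∈ S ∧ j ∈ S ∧ k ≤ j) then q0^((j-k).toNat) else 0)
              * (if j ∈ S then A j * (cc j)^γ else 0) := ENNReal.tsum_le_tsum hptwise
        _ = (∑' k : ℤ, (if (k ∈ S ∧ j ∈ S ∧ k ≤ j) then q0^((j-k).toNat) else 0))
              * (if j ∈ S then A j * (cc j)^γ else 0) := ENNReal.tsum_mul_right
        _ ≤ K2 * (if j ∈ S then A j * (cc j)^γ else 0) := by
            apply mul_le_mul_left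
            rw [tsum_of_support_le (fun k => if (k ∈ S ∧ j ∈ S ∧ k ≤ j)
              then q0^((j-k).toNat) else 0) j
              (fun kk hkk => if_neg (fun hh => by omega))]
            calc (∑' m:ℕ, (if ((j - (m:ℤ)) ∈ S ∧ j ∈ S ∧ (j - (m:ℤ)) ≤ j)
                    then q0^((j-(j-(m:ℤ))).toNat) else 0))
                ≤ ∑' m:ℕ, q0^m := by
                  apply ENNReal.tsum_le_tsum
                  intro m
                  by_cases h : (j - (m:ℤ)) ∈ S ∧ j ∈ S ∧ (j - (m:ℤ)) ≤ j
                  · rw [if_pos h, show (j-(j-(m:ℤ))).toNat = m by omega]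
                  · rw [if_neg h]; exact zero_le
              _ = K2 := by rw [ENNReal.tsum_geometric, hK2]
    -- conversions
    have hBteq : ∀ j : ℤ, j ∈ S →
        (∑' i : zset ((j:ℝ):EReal) M, B (i:ℤ)) = Bt j := by
      intro j hj
      rw [tsum_subtype (zset ((j:ℝ):EReal) M) B, hBt]
      apply tsum_congr
      intro i
      rw [Set.indicator_apply]
      by_cases h : i ∈ zset ((j:ℝ):EReal) M
      · rw [if_pos h, if_pos ((hzk j i hj).1 h)]
      · rw [if_neg h, if_neg (fun hx => h ((hzk j i hj).2 hx))]
    have hT1eq : ∀ k : ℤ, k ∈ S →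
        (∑' i : zset ((k:ℝ):EReal) M, Dd k ((i:ℤ)+1) * B (i:ℤ)) = T1 k := by
      intro k hk
      rw [tsum_subtype (zset ((k:ℝ):EReal) M) (fun i => Dd k (i+1) * B i), hT1]
      apply tsum_congr
      intro i
      rw [Set.indicator_apply]
      by_cases h : i ∈ zset ((k:ℝ):EReal) M
      · rw [if_pos h, if_pos ((hzk k i hk).1 h)]
      · rw [if_neg h, if_neg (fun hx => h ((hzk k i hk).2 hx))]
    have hccγ : ∀ j : ℤ, (cc j)^γ = (Dd j (j+1))^β * (Bt j)^β := by
      intro j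
      rw [hcc]
      simp only
      rw [ENNReal.mul_rpow_of_nonneg _ _ (le_of_lt hγpos), hED,
        ← ENNReal.rpow_mul, ← ENNReal.rpow_mul, hαγ]
    have hMID : (∑' k : S, A (k:ℤ)
          * (∑' i : zset (((k:ℤ):ℝ):EReal) M, Dd (k:ℤ) ((i:ℤ)+1) * B (i:ℤ))^β)
        = ∑' k : ℤ, (if k ∈ S then A k * (T1 k)^β else 0) := by
      rw [tsum_subtype S (fun k => A k
        * (∑' i : zset ((k:ℝ):EReal) M, Dd k ((i:ℤ)+1) * B (i:ℤ))^β)]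
      apply tsum_congr
      intro k
      rw [Set.indicator_apply]
      by_cases h : k ∈ S
      · rw [if_pos h, if_pos h, hT1eq k h]
      · rw [if_neg h, if_neg h]
    have hRHS : (∑' k : S, A (k:ℤ) * (Dd (k:ℤ) ((k:ℤ)+1))^β
          * (∑' i : zset (((k:ℤ):ℝ):EReal) M, B (i:ℤ))^β)
        = ∑' j : ℤ, (if j ∈ S then A j * (Dd j (j+1))^β * (Bt j)^β else 0) := by
      rw [tsum_subtype S (fun k => A k * (Dd k (k+1))^β
        * (∑' i : zset ((k:ℝ):EReal) M, B (i:ℤ))^β)]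
      apply tsum_congr
      intro k
      rw [Set.indicator_apply]
      by_cases h : k ∈ S
      · rw [if_pos h, if_pos h, hBteq k h]
      · rw [if_neg h, if_neg h]
    have hCORE : (∑' k : ℤ, (if k ∈ S then A k * (X k)^γ else 0))
        ≤ K1^γ * K2 * ∑' j : ℤ, (if j ∈ S then A j * (Dd j (j+1))^β * (Bt j)^β else 0) := by
      calc (∑' k : ℤ, (if k ∈ S then A k * (X k)^γ else 0))
          ≤ ∑' k : ℤ, (if k ∈ S then A k * (K1^γ * ∑' j : ℤ,
              (if (j ∈ S ∧ k ≤ j) then w2^((j-k).toNat) * (cc j)^γ else 0)) else 0) := by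
            apply ENNReal.tsum_le_tsum
            intro k
            by_cases h : k ∈ S
            · rw [if_pos h, if_pos h]
              exact mul_le_mul_right (hU3 k h) _
            · rw [if_neg h, if_neg h]
        _ = K1^γ * ∑' k : ℤ, ∑' j : ℤ, (if (k ∈ S ∧ j ∈ S ∧ k ≤ j)
              then A k * (w2^((j-k).toNat) * (cc j)^γ) else 0) := by
            rw [← ENNReal.tsum_mul_left]
            apply tsum_congr
            intro k
            by_cases h : k ∈ S
            · rw [if_pos h, ← mul_assoc, mul_comm (A k) (K1^γ), mul_assoc,
                ← ENNReal.tsum_mul_left]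
              congr 1
              apply tsum_congr
              intro j
              by_cases hj : j ∈ S ∧ k ≤ j
              · rw [if_pos hj, if_pos ⟨h, hj⟩]
              · rw [if_neg hj, if_neg (fun hh => hj hh.2), mul_zero]
            · rw [if_neg h]
              rw [tsum_congr (fun j => if_neg (fun hh => h hh.1)), tsum_zero, mul_zero]
        _ = K1^γ * ∑' j : ℤ, ∑' k : ℤ, (if (k ∈ S ∧ j ∈ S ∧ k ≤ j)
              then A k * (w2^((j-k).toNat) * (cc j)^γ) else 0) := by
            rw [ENNReal.tsum_comm]
        _ ≤ K1^γ * ∑' j : ℤ, K2 * (if j ∈ S then A j * (cc j)^γ else 0) :=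
            mul_le_mul_right (ENNReal.tsum_le_tsum hU4) _
        _ = K1^γ * K2 * ∑' j : ℤ,
              (if j ∈ S then A j * (Dd j (j+1))^β * (Bt j)^β else 0) := by
            rw [ENNReal.tsum_mul_left, ← mul_assoc]
            congr 1
            apply tsum_congr
            intro j
            by_cases h : j ∈ S
            · rw [if_pos h, if_pos h, hccγ, mul_assoc]
            · rw [if_neg h, if_neg h]
    rw [hMID, hRHS]
    calc (∑' k : ℤ, (if k ∈ S then A k * (T1 k)^β else 0))
        ≤ ∑' k : ℤ, (if k ∈ S then (ENNReal.ofReal 2)^(p*β) * (A k * (X k)^γ) else 0) := by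
          apply ENNReal.tsum_le_tsum
          intro k
          by_cases h : k ∈ S
          · rw [if_pos h, if_pos h]
            calc A k * (T1 k)^β ≤ A k * ((ENNReal.ofReal 2)^p * (X k)^p)^β :=
                  mul_le_mul_right (ENNReal.rpow_le_rpow (hU1 k h) hβ) _
              _ = (ENNReal.ofReal 2)^(p*β) * (A k * (X k)^γ) := by
                  rw [ENNReal.mul_rpow_of_nonneg _ _ hβ, ← ENNReal.rpow_mul,
                    ← ENNReal.rpow_mul, hγdef]
                  ring
          · rw [if_neg h, if_neg h]
      _ = (ENNReal.ofReal 2)^(p*β)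
            * ∑' k : ℤ, (if k ∈ S then A k * (X k)^γ else 0) := by
          rw [← ENNReal.tsum_mul_left]
          apply tsum_congr
          intro k
          by_cases h : k ∈ S
          · rw [if_pos h, if_pos h]
          · rw [if_neg h, if_neg h, mul_zero]
      _ ≤ (ENNReal.ofReal 2)^(p*β) * (K1^γ * K2
            * ∑' j : ℤ, (if j ∈ S then A j * (Dd j (j+1))^β * (Bt j)^β else 0)) :=
          mul_le_mul_right hCORE _
      _ ≤ ENNReal.ofReal (K.toReal + 1)
            * ∑' j : ℤ, (if j ∈ S then A j * (Dd j (j+1))^β * (Bt j)^β else 0) := by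
          rw [← mul_assoc, ← mul_assoc]
          apply mul_le_mul_left
          calc (ENNReal.ofReal 2)^(p*β) * K1^γ * K2 = K := by rw [hK]
            _ ≤ ENNReal.ofReal (K.toReal+1) := hKle
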